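/- The maximin share is self-maximizing: for any valuations v, v' over a finite set M and any number n of agents, the minimum of v over bundles S with v(S) ≥ MMS_n(v) is at least the minimum of v over bundles S with v'(S) ≥ MMS_n(v'). That is, truthful reporting maximizes the implied guarantee with respect to the true valuation v. -/
import Mathlib


/-- The maximin share of a valuation `v` for `n` agents: the supremum of values `x`
such that there is a partition of the items into `n` bundles each of `v`-value at least `x`. -/
noncomputable def MMS {M : Type*} [Fintype M] [DecidableEq M] (n : ℕ) (v : Finset M → ℝ) : ℝ :=
  sSup {x : ℝ | ∃ P : Fin n → Finset M,
    (∀ i j, i ≠ j → Disjoint (P i) (P j)) ∧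
    Finset.univ.biUnion P = Finset.univ ∧
    ∀ j, x ≤ v (P j)}

lemma mms_bddAbove {M : Type*} [Fintype M] [DecidableEq M] (n : ℕ) (hn : 1 ≤ n)
    (v : Finset M → ℝ) (hvmono : ∀ S T : Finset M, S ⊆ T → v S ≤ v T) :
    BddAbove {x : ℝ | ∃ P : Fin n → Finset M,
      (∀ i j, i ≠ j → Disjoint (P i) (P j)) ∧
      Finset.univ.biUnion P = Finset.univ ∧
      ∀ j, x ≤ v (P j)} := by
  haveI : NeZero n := ⟨by omega⟩
  exact ⟨v Finset.univ, by
    rintro x ⟨P, -, -, h⟩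
    exact (h 0).trans (hvmono _ _ (Finset.subset_univ _))⟩

/-- The supremum in the definition of MMS is attained. -/
lemma mms_attained {M : Type*} [Fintype M] [DecidableEq M] (n : ℕ) (hn : 1 ≤ n)
    (v : Finset M → ℝ) (hv0 : v ∅ = 0)
    (hvmono : ∀ S T : Finset M, S ⊆ T → v S ≤ v T) :
    ∃ P : Fin n → Finset M,
      (∀ i j, i ≠ j → Disjoint (P i) (P j)) ∧
      Finset.univ.biUnion P = Finset.univ ∧
      ∀ j, MMS n v ≤ v (P j) := by
  classical
  haveI : NeZero n := ⟨by omega⟩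
  set X := {x : ℝ | ∃ P : Fin n → Finset M,
    (∀ i j, i ≠ j → Disjoint (P i) (P j)) ∧
    Finset.univ.biUnion P = Finset.univ ∧
    ∀ j, x ≤ v (P j)} with hXdef
  have h0 : (0 : ℝ) ∈ X := by
    refine ⟨fun j => if j = 0 then Finset.univ else ∅, ?_, ?_, ?_⟩
    · intro i j hij
      by_cases hi : i = 0 <;> by_cases hj : j = 0 <;> simp_all
    · apply Finset.eq_univ_iff_forall.mpr
      intro a
      exact Finset.mem_biUnion.mpr ⟨0, Finset.mem_univ _, by simp⟩
    · intro j
      by_cases hj : j = 0 <;> simp [hj, hv0]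
      rw [← hv0]; exact hvmono _ _ (Finset.empty_subset _)
  have hbdd : BddAbove X := mms_bddAbove n hn v hvmono
  have hclosed : IsClosed X := by
    have hXeq : X = ⋃ (Q : {P : Fin n → Finset M //
        (∀ i j, i ≠ j → Disjoint (P i) (P j)) ∧
        Finset.univ.biUnion P = Finset.univ}),
        Set.Iic (Finset.univ.inf' Finset.univ_nonempty (fun j => v (Q.1 j))) := by
      ext x
      simp only [Set.mem_iUnion, Set.mem_Iic, hXdef, Set.mem_setOf_eq]
      constructor
      · rintro ⟨P, h1, h2, h3⟩
        exact ⟨⟨P, h1, h2⟩, Finset.le_inf' _ _ (fun j _ => h3 j)⟩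
      · rintro ⟨⟨P, h1, h2⟩, h3⟩
        exact ⟨P, h1, h2, fun j =>
          (Finset.le_inf'_iff _ _).mp h3 j (Finset.mem_univ j)⟩
    rw [hXeq]
    exact isClosed_iUnion_of_finite (fun Q => isClosed_Iic)
  have hmem : sSup X ∈ X := hclosed.csSup_mem ⟨0, h0⟩ hbdd
  obtain ⟨P, h1, h2, h3⟩ := hmem
  exact ⟨P, h1, h2, h3⟩

/-- The MMS is self-maximizing: the implied guarantee
`min { v S : v' S ≥ MMS n v' }` is maximized by the truthful report `v' = v`. -/
theorem mms_self_maximizing {M : Type*} [Fintype M] [DecidableEq M] (n : ℕ) (hn : 1 ≤ n)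
    (v v' : Finset M → ℝ)
    (hv0 : v ∅ = 0) (hv'0 : v' ∅ = 0)
    (hvmono : ∀ S T : Finset M, S ⊆ T → v S ≤ v T)
    (hv'mono : ∀ S T : Finset M, S ⊆ T → v' S ≤ v' T) :
    sInf (v '' {S : Finset M | MMS n v' ≤ v' S})
      ≤ sInf (v '' {S : Finset M | MMS n v ≤ v S}) := by
  classical
  haveI : NeZero n := ⟨by omega⟩
  obtain ⟨P, hdisj, hcover, hP⟩ := mms_attained n hn v' hv'0 hv'mono
  -- bundle of P with minimal v-value
  obtain ⟨j0, -, hj0⟩ := Finset.exists_min_image Finset.univ (fun j => v (P j))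
    ⟨0, Finset.mem_univ 0⟩
  -- v (P j0) ≤ MMS n v
  have h1 : v (P j0) ≤ MMS n v :=
    le_csSup (mms_bddAbove n hn v hvmono)
      ⟨P, hdisj, hcover, fun j => hj0 j (Finset.mem_univ j)⟩
  -- the left sInf is ≤ v (P j0)
  have hbddA' : BddBelow (v '' {S : Finset M | MMS n v' ≤ v' S}) := by
    refine ⟨0, ?_⟩
    rintro _ ⟨S, -, rfl⟩
    rw [← hv0]; exact hvmono _ _ (Finset.empty_subset _)
  have h2 : sInf (v '' {S : Finset M | MMS n v' ≤ v' S}) ≤ v (P j0) :=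
    csInf_le hbddA' ⟨P j0, hP j0, rfl⟩
  -- the right-hand set is nonempty
  obtain ⟨Q, -, -, hQ⟩ := mms_attained n hn v hv0 hvmono
  have hAne : (v '' {S : Finset M | MMS n v ≤ v S}).Nonempty :=
    ⟨v Finset.univ, Finset.univ,
      (hQ 0).trans (hvmono _ _ (Finset.subset_univ _)), rfl⟩
  refine le_csInf hAne ?_
  rintro _ ⟨S, hS, rfl⟩
  exact h2.trans (h1.trans hS)
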